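/- Let d ≥ 2, a ∈ (0,1), N ∈ ℕ, let G = (V_G, E_G) ⊂ ℤ^d be a finite domain, let x ∈ V_G, and let 𝒫 ∈ SAP_x(N) be a self-avoiding polygon with 𝒫 ⊂ G such that the pattern P′ occurs at aN or more steps of 𝒫 (i.e., 𝒫 ∉ SAP_x(N, aN, P′)). Then for all λ, n ∈ (0,∞), Z_{λ,n}(G∖𝒫) / Z_{λ,n}(G) ≤ 1/(1 + λ⁴ n)^{aN}. -/

import Mathlib

open scoped BigOperators ENNReal

/-- Vertices of the lattice `ℤ^d`. -/
abbrev Vtx (d : ℕ) := Fin d → ℤ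

/-- Lattice adjacency: Euclidean distance one. -/
def latAdj {d : ℕ} (x y : Vtx d) : Prop := (∑ i, (x i - y i) ^ 2) = 1

/-- The hypercubic lattice `ℤ^d` as a simple graph. -/
def latticeGraph (d : ℕ) : SimpleGraph (Vtx d) where
  Adj := latAdj
  symm := by
    constructor
    intro x y h
    unfold latAdj at h ⊢
    calc (∑ i, (y i - x i) ^ 2) = ∑ i, (x i - y i) ^ 2 :=
          Finset.sum_congr rfl fun i _ => by ring
      _ = 1 := h
  loopless := by
    constructor
    intro x h
    unfold latAdj at h
    simp at h

/-- The `i`-th standard unit vector of `ℤ^d`. -/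
def stdv (d : ℕ) (i : ℕ) : Vtx d := fun j => if (j : ℕ) = i then 1 else 0

/-- A finite domain: a finite subgraph of the lattice containing all lattice edges
between its vertices. -/
def IsFiniteDomain {d : ℕ} (G : (latticeGraph d).Subgraph) : Prop :=
  G.verts.Finite ∧ ∀ x ∈ G.verts, ∀ y ∈ G.verts, (latticeGraph d).Adj x y → G.Adj x y

/-- `Ω_G`: spanning subgraphs of `G` in which every vertex has degree `0` or `2`. -/
def loopConfigs {d : ℕ} (G : (latticeGraph d).Subgraph) : Set ((latticeGraph d).Subgraph) :=
  {κ | κ ≤ G ∧ κ.verts = G.verts ∧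
    ∀ v ∈ κ.verts, (κ.neighborSet v).ncard = 0 ∨ (κ.neighborSet v).ncard = 2}

/-- `L(κ)`: the number of loops of `κ`, i.e. of connected components containing an edge. -/
noncomputable def numLoops {d : ℕ} (κ : (latticeGraph d).Subgraph) : ℕ :=
  Set.ncard {C : κ.spanningCoe.ConnectedComponent | ∃ e ∈ κ.edgeSet, ∀ v ∈ e, v ∈ C.supp}

/-- The weight `λ^{o(κ)} n^{L(κ)}` of a configuration (with the convention `0^0 = 1`). -/
noncomputable def loopWt {d : ℕ} (lam n : ℝ) (κ : (latticeGraph d).Subgraph) : ℝ :=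
  lam ^ κ.edgeSet.ncard * n ^ numLoops κ

/-- The partition function `Z_{λ,n}(G)`. -/
noncomputable def partitionZ {d : ℕ} (lam n : ℝ) (G : (latticeGraph d).Subgraph) : ℝ :=
  ∑' κ : loopConfigs G, loopWt lam n κ.1

/-- The probability, under the loop `O(n)` measure on `Ω_G`, of an event `A`. -/
noncomputable def probEvent {d : ℕ} (lam n : ℝ) (G : (latticeGraph d).Subgraph)
    (A : (latticeGraph d).Subgraph → Prop) : ℝ :=
  (∑' κ : {κ : (latticeGraph d).Subgraph // κ ∈ loopConfigs G ∧ A κ}, loopWt lam n κ.1) /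
    partitionZ lam n G

/-- The set of edges of the connected component of `x` in `κ`. -/
def compEdgeSet {d : ℕ} (κ : (latticeGraph d).Subgraph) (x : Vtx d) : Set (Sym2 (Vtx d)) :=
  {e | e ∈ κ.edgeSet ∧ ∀ v ∈ e, κ.spanningCoe.Reachable x v}

/-- `|P_x(κ)|`: the number of edges of the connected component of `x` in `κ`. -/
noncomputable def compLen {d : ℕ} (κ : (latticeGraph d).Subgraph) (x : Vtx d) : ℕ :=
  (compEdgeSet κ x).ncard

/-- `P_x(κ)`: the connected component of `x` in `κ`, as a subgraph of the lattice. -/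
def compSubgraph {d : ℕ} (κ : (latticeGraph d).Subgraph) (x : Vtx d) :
    (latticeGraph d).Subgraph where
  verts := {v | v ∈ κ.verts ∧ κ.spanningCoe.Reachable x v}
  Adj u v := κ.Adj u v ∧ κ.spanningCoe.Reachable x u
  adj_sub h := κ.adj_sub h.1
  edge_vert h := ⟨κ.edge_vert h.1, h.2⟩
  symm := by
    constructor
    intro u v h
    exact ⟨h.1.symm, h.2.trans (SimpleGraph.Adj.reachable (G := κ.spanningCoe) h.1)⟩

/-- A self-avoiding walk with `M` vertices (length `M - 1`) starting at `x`. -/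
def IsSAWalk {d M : ℕ} (x : Vtx d) (ω : Fin M → Vtx d) : Prop :=
  (∀ h : 0 < M, ω ⟨0, h⟩ = x) ∧ Function.Injective ω ∧
    ∀ i : ℕ, ∀ h : i + 1 < M, latAdj (ω ⟨i, by omega⟩) (ω ⟨i + 1, h⟩)

/-- A pattern: a finite walk `(p 0, …, p len)` (to be used as a self-avoiding walk). -/
structure SAWPattern (d : ℕ) where
  len : ℕ
  p : Fin (len + 1) → Vtx d

/-- The pattern `P` occurs at step `j` of the walk `ω`. -/
def occursAt {d M : ℕ} (P : SAWPattern d) (ω : Fin M → Vtx d) (j : ℕ) : Prop :=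
  ∃ (h : j + P.len + 1 ≤ M) (v : Vtx d), ∀ k : Fin (P.len + 1),
    ω ⟨j + k.1, by have hk := k.2; omega⟩ = P.p k + v

/-- The number of steps of `ω` at which the pattern `P` occurs. -/
noncomputable def numOcc {d M : ℕ} (P : SAWPattern d) (ω : Fin M → Vtx d) : ℕ :=
  Set.ncard {j : ℕ | occursAt P ω j}

/-- A proper internal pattern: for every `k` there is a self-avoiding walk on which the
pattern occurs at `k` or more different steps. -/
def ProperInternal {d : ℕ} (P : SAWPattern d) : Prop :=
  ∀ k : ℕ, ∃ (x : Vtx d) (M : ℕ) (ω : Fin (M + 1) → Vtx d), IsSAWalk x ω ∧ k ≤ numOcc P ω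

/-- `|SAW_x(N)|`: the number of `N`-step self-avoiding walks starting at `x`. -/
noncomputable def numSAW (d : ℕ) (x : Vtx d) (N : ℕ) : ℕ :=
  Nat.card {ω : Fin (N + 1) → Vtx d // IsSAWalk x ω}

/-- `|SAW_x[N, w, P]|`: the number of `N`-step self-avoiding walks starting at `x` on which
the pattern `P` occurs at fewer than `w` steps. -/
noncomputable def numSAWFewOcc (d : ℕ) (x : Vtx d) (N : ℕ) (w : ℝ) (P : SAWPattern d) : ℕ :=
  Nat.card {ω : Fin (N + 1) → Vtx d // IsSAWalk x ω ∧ (numOcc P ω : ℝ) < w}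

/-- The connective constant `μ(ℤ^d) = lim_N |SAW_0(N)|^{1/N}` (the limit exists, hence
equals the `limsup`). -/
noncomputable def connConst (d : ℕ) : ℝ :=
  Filter.limsup (fun N : ℕ => (numSAW d 0 N : ℝ) ^ ((N : ℝ)⁻¹)) Filter.atTop

/-- The pattern `P' = (o, e₂, e₁ + e₂, e₁)`. -/
def patternP' (d : ℕ) : SAWPattern d :=
  ⟨3, ![0, stdv d 1, stdv d 0 + stdv d 1, stdv d 0]⟩

/-- `P ∈ SAP_x(N)`: `P` is an `N`-step self-avoiding polygon one of whose vertices is `x`;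
for `N = 1` the degenerate polygon `{x}`, for `N ≥ 4` a single cycle with `N` vertices and
`N` edges. -/
def IsSAP {d : ℕ} (x : Vtx d) (N : ℕ) (P : (latticeGraph d).Subgraph) : Prop :=
  (N = 1 ∧ P.verts = {x} ∧ P.edgeSet = ∅) ∨
  (4 ≤ N ∧ x ∈ P.verts ∧ P.verts.ncard = N ∧ P.edgeSet.ncard = N ∧
    (∀ v ∈ P.verts, (P.neighborSet v).ncard = 2) ∧
    ∀ u ∈ P.verts, ∀ v ∈ P.verts, P.spanningCoe.Reachable u v)

/-- The walk `ω` (with `N` vertices) traces the `N`-step self-avoiding polygon `P`,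
starting at `x`. -/
def Traces {d : ℕ} (x : Vtx d) (N : ℕ) (P : (latticeGraph d).Subgraph)
    (ω : Fin N → Vtx d) : Prop :=
  IsSAWalk x ω ∧ (∀ v, v ∈ P.verts ↔ ∃ i, ω i = v) ∧
    (∀ i : ℕ, ∀ h : i + 1 < N, P.Adj (ω ⟨i, by omega⟩) (ω ⟨i + 1, h⟩)) ∧
    ∀ h : 0 < N, P.Adj (ω ⟨N - 1, by omega⟩) (ω ⟨0, h⟩)

/-- `G ∖ P`: the subgraph of `G` induced on `V_G ∖ V_P`. -/
def graphDiff {d : ℕ} (G P : (latticeGraph d).Subgraph) : (latticeGraph d).Subgraph where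
  verts := G.verts \ P.verts
  Adj u v := G.Adj u v ∧ u ∉ P.verts ∧ v ∉ P.verts
  adj_sub h := G.adj_sub h.1
  edge_vert h := ⟨G.edge_vert h.1, h.2.1⟩
  symm := ⟨fun _ _ h => ⟨h.1.symm, h.2.2, h.2.1⟩⟩

/-- The subgraph of `G` induced on a vertex set `S` (used for `U(P)` with `S = V_P`). -/
def inducedOn {d : ℕ} (G : (latticeGraph d).Subgraph) (S : Set (Vtx d)) :
    (latticeGraph d).Subgraph where
  verts := S
  Adj u v := G.Adj u v ∧ u ∈ S ∧ v ∈ S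
  adj_sub h := G.adj_sub h.1
  edge_vert h := h.2.1
  symm := ⟨fun _ _ h => ⟨h.1.symm, h.2.2, h.2.1⟩⟩

/-- The unit-square polygon with corner `x`: vertices `x, x+e₁, x+e₂, x+e₁+e₂` and the
four lattice edges between them. -/
def unitSquare (d : ℕ) (x : Vtx d) : (latticeGraph d).Subgraph where
  verts := {x, x + stdv d 0, x + stdv d 1, x + stdv d 0 + stdv d 1}
  Adj u v := (latticeGraph d).Adj u v ∧
    u ∈ ({x, x + stdv d 0, x + stdv d 1, x + stdv d 0 + stdv d 1} : Set (Vtx d)) ∧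
    v ∈ ({x, x + stdv d 0, x + stdv d 1, x + stdv d 0 + stdv d 1} : Set (Vtx d))
  adj_sub h := h.1
  edge_vert h := h.2.1
  symm := ⟨fun _ _ h => ⟨h.1.symm, h.2.2, h.2.1⟩⟩

/-- `E_{G,λ,n}[e^{δ |P_x|}]`. -/
noncomputable def expMoment {d : ℕ} (δ lam n : ℝ) (G : (latticeGraph d).Subgraph)
    (x : Vtx d) : ℝ :=
  (∑' κ : loopConfigs G, Real.exp (δ * (compLen κ.1 x : ℝ)) * loopWt lam n κ.1) /
    partitionZ lam n G

/-- `L(δ, λ, n)`: the supremum of `E_{G,λ,n}[e^{δ |P_x|}]` over finite domains `G ⊆ ℤ^d`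
and `x ∈ V_G`, valued in `[0,∞]`. -/
noncomputable def mathcalL (d : ℕ) (δ lam n : ℝ) : ℝ≥0∞ :=
  ⨆ (G : (latticeGraph d).Subgraph) (_ : IsFiniteDomain G) (x : Vtx d) (_ : x ∈ G.verts),
    ENNReal.ofReal (expMoment δ lam n G x)

/-- `λ_c(n) = sup {λ ≥ 0 : L(δ,λ,n) < ∞ for some δ > 0}`, valued in `[0,∞]`. -/
noncomputable def lambdaC (d : ℕ) (n : ℝ) : ℝ≥0∞ :=
  ⨆ (lam : ℝ) (_ : 0 ≤ lam ∧ ∃ δ : ℝ, 0 < δ ∧ mathcalL d δ lam n < ⊤),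
    ENNReal.ofReal lam

namespace PRB

variable {d : ℕ}

/-- square corner set -/
def sqV (d : ℕ) (b : Vtx d) : Set (Vtx d) :=
  {b, stdv d 1 + b, stdv d 0 + stdv d 1 + b, stdv d 0 + b}

def cycAdj (d : ℕ) (b u v : Vtx d) : Prop :=
  (u = b ∧ v = stdv d 1 + b) ∨ (v = b ∧ u = stdv d 1 + b) ∨
  (u = stdv d 1 + b ∧ v = stdv d 0 + stdv d 1 + b) ∨
  (v = stdv d 1 + b ∧ u = stdv d 0 + stdv d 1 + b) ∨
  (u = stdv d 0 + stdv d 1 + b ∧ v = stdv d 0 + b) ∨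
  (v = stdv d 0 + stdv d 1 + b ∧ u = stdv d 0 + b) ∨
  (u = stdv d 0 + b ∧ v = b) ∨ (v = stdv d 0 + b ∧ u = b)

lemma cne (hd : 2 ≤ d) (b : Vtx d) :
    b ≠ stdv d 1 + b ∧ b ≠ stdv d 0 + stdv d 1 + b ∧ b ≠ stdv d 0 + b ∧
    stdv d 1 + b ≠ stdv d 0 + stdv d 1 + b ∧ stdv d 1 + b ≠ stdv d 0 + b ∧
    stdv d 0 + stdv d 1 + b ≠ stdv d 0 + b := by
  have h0 : (0:ℕ) < d := by omega
  have h1 : (1:ℕ) < d := by omega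
  refine ⟨?_, ?_, ?_, ?_, ?_, ?_⟩ <;> intro h
  · have := congrFun h ⟨1, h1⟩; simp [stdv, Pi.add_apply] at this
  · have := congrFun h ⟨0, h0⟩; simp [stdv, Pi.add_apply] at this
  · have := congrFun h ⟨0, h0⟩; simp [stdv, Pi.add_apply] at this
  · have := congrFun h ⟨0, h0⟩; simp [stdv, Pi.add_apply] at this
  · have := congrFun h ⟨1, h1⟩; simp [stdv, Pi.add_apply] at this
  · have := congrFun h ⟨1, h1⟩; simp [stdv, Pi.add_apply] at this

lemma latAdj_stdv {k : ℕ} (hk : k < d) (y : Vtx d) : latAdj y (stdv d k + y) := by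
  unfold latAdj
  have : ∀ i : Fin d, (y i - (stdv d k + y) i) ^ 2 = if i = ⟨k, hk⟩ then 1 else 0 := by
    intro i
    simp only [Pi.add_apply, stdv, Fin.ext_iff]
    split_ifs <;> ring
  rw [Finset.sum_congr rfl fun i _ => this i]
  simp

lemma latAdj_symm {u v : Vtx d} (h : latAdj u v) : latAdj v u := by
  unfold latAdj at h ⊢
  calc (∑ i, (v i - u i) ^ 2) = ∑ i, (u i - v i) ^ 2 :=
        Finset.sum_congr rfl fun i _ => by ring
    _ = 1 := h

lemma cycAdj_latAdj (hd : 2 ≤ d) {b u v : Vtx d} (h : cycAdj d b u v) : latAdj u v := by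
  have h0 : (0:ℕ) < d := by omega
  have h1 : (1:ℕ) < d := by omega
  have e12 : stdv d 0 + stdv d 1 + b = stdv d 0 + (stdv d 1 + b) := by ring
  have e21 : stdv d 0 + stdv d 1 + b = stdv d 1 + (stdv d 0 + b) := by ring
  rcases h with ⟨h1',h2⟩|⟨h1',h2⟩|⟨h1',h2⟩|⟨h1',h2⟩|⟨h1',h2⟩|⟨h1',h2⟩|⟨h1',h2⟩|⟨h1',h2⟩ <;>
    rw [h1', h2]
  · exact latAdj_stdv h1 b
  · exact latAdj_symm (latAdj_stdv h1 b)
  · rw [e12]; exact latAdj_stdv h0 _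
  · rw [e12]; exact latAdj_symm (latAdj_stdv h0 _)
  · rw [e21]; exact latAdj_symm (latAdj_stdv h1 _)
  · rw [e21]; exact latAdj_stdv h1 _
  · exact latAdj_symm (latAdj_stdv h0 b)
  · exact latAdj_stdv h0 b

lemma cycAdj_symm {b u v : Vtx d} (h : cycAdj d b u v) : cycAdj d b v u := by
  unfold cycAdj at h ⊢; tauto

lemma cycAdj_mem_left {b u v : Vtx d} (h : cycAdj d b u v) : u ∈ sqV d b := by
  unfold cycAdj at h; unfold sqV
  rcases h with ⟨h1,_⟩|⟨_,h1⟩|⟨h1,_⟩|⟨_,h1⟩|⟨h1,_⟩|⟨_,h1⟩|⟨h1,_⟩|⟨_,h1⟩ <;> rw [h1] <;> simp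

lemma cycAdj_mem_right {b u v : Vtx d} (h : cycAdj d b u v) : v ∈ sqV d b :=
  cycAdj_mem_left (cycAdj_symm h)

end PRB

namespace PRB
variable {d : ℕ}

/-- the four edges of the square at `b` -/
def sqE (d : ℕ) (b : Vtx d) : Set (Sym2 (Vtx d)) :=
  {s(b, stdv d 1 + b), s(stdv d 1 + b, stdv d 0 + stdv d 1 + b),
   s(stdv d 0 + stdv d 1 + b, stdv d 0 + b), s(stdv d 0 + b, b)}

lemma mem_sqE_1 {b : Vtx d} : s(b, stdv d 1 + b) ∈ sqE d b := Or.inl rfl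
lemma mem_sqE_2 {b : Vtx d} : s(stdv d 1 + b, stdv d 0 + stdv d 1 + b) ∈ sqE d b :=
  Or.inr (Or.inl rfl)
lemma mem_sqE_3 {b : Vtx d} : s(stdv d 0 + stdv d 1 + b, stdv d 0 + b) ∈ sqE d b :=
  Or.inr (Or.inr (Or.inl rfl))
lemma mem_sqE_4 {b : Vtx d} : s(stdv d 0 + b, b) ∈ sqE d b :=
  Or.inr (Or.inr (Or.inr rfl))

lemma cycAdj_iff_sqE {b u v : Vtx d} :
    cycAdj d b u v ↔ s(u, v) ∈ sqE d b := by
  constructor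
  · rintro (⟨h1,h2⟩|⟨h1,h2⟩|⟨h1,h2⟩|⟨h1,h2⟩|⟨h1,h2⟩|⟨h1,h2⟩|⟨h1,h2⟩|⟨h1,h2⟩) <;> rw [h1, h2]
    · exact mem_sqE_1
    · rw [Sym2.eq_swap]; exact mem_sqE_1
    · exact mem_sqE_2
    · rw [Sym2.eq_swap]; exact mem_sqE_2
    · exact mem_sqE_3
    · rw [Sym2.eq_swap]; exact mem_sqE_3
    · exact mem_sqE_4
    · rw [Sym2.eq_swap]; exact mem_sqE_4
  · intro h
    rcases h with h | h | h | h <;>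
      [skip; skip; skip; rw [Set.mem_singleton_iff] at h] <;>
      rw [Sym2.eq_iff] at h <;> unfold cycAdj <;>
      rcases h with ⟨h1, h2⟩ | ⟨h1, h2⟩
    · exact Or.inl ⟨h1, h2⟩
    · exact Or.inr (Or.inl ⟨h2, h1⟩)
    · exact Or.inr (Or.inr (Or.inl ⟨h1, h2⟩))
    · exact Or.inr (Or.inr (Or.inr (Or.inl ⟨h2, h1⟩)))
    · exact Or.inr (Or.inr (Or.inr (Or.inr (Or.inl ⟨h1, h2⟩))))
    · exact Or.inr (Or.inr (Or.inr (Or.inr (Or.inr (Or.inl ⟨h2, h1⟩)))))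
    · exact Or.inr (Or.inr (Or.inr (Or.inr (Or.inr (Or.inr (Or.inl ⟨h1, h2⟩))))))
    · exact Or.inr (Or.inr (Or.inr (Or.inr (Or.inr (Or.inr (Or.inr ⟨h2, h1⟩))))))

lemma sqE_ncard (hd : 2 ≤ d) (b : Vtx d) : (sqE d b).ncard = 4 := by
  obtain ⟨n1, n2, n3, n4, n5, n6⟩ := cne hd b
  unfold sqE
  rw [Set.ncard_insert_of_notMem, Set.ncard_insert_of_notMem,
    Set.ncard_insert_of_notMem, Set.ncard_singleton]
  · simp only [Set.mem_singleton_iff, Sym2.eq_iff]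
    tauto
  · simp only [Set.mem_insert_iff, Set.mem_singleton_iff, Sym2.eq_iff]
    push_neg
    refine ⟨⟨?_, ?_⟩, ?_, ?_⟩ <;> tauto
  · simp only [Set.mem_insert_iff, Set.mem_singleton_iff, Sym2.eq_iff]
    push_neg
    refine ⟨⟨?_, ?_⟩, ⟨?_, ?_⟩, ?_, ?_⟩ <;> tauto

lemma sqE_finite (b : Vtx d) : (sqE d b).Finite := by
  unfold sqE
  exact (Set.finite_singleton _).insert _ |>.insert _ |>.insert _

set_option maxHeartbeats 1000000 in
/-- neighbours inside the square: each corner has exactly the two cyclic neighbours -/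
lemma cyc_nbrs (hd : 2 ≤ d) (b u : Vtx d) (hu : u ∈ sqV d b) :
    ∃ w₁ w₂ : Vtx d, w₁ ≠ w₂ ∧ {v | cycAdj d b u v} = {w₁, w₂} := by
  obtain ⟨n1, n2, n3, n4, n5, n6⟩ := cne hd b
  rcases hu with hu | hu | hu | hu
  · refine ⟨stdv d 1 + b, stdv d 0 + b, n5, ?_⟩
    ext v
    simp only [Set.mem_setOf_eq, cycAdj, Set.mem_insert_iff, Set.mem_singleton_iff, hu]
    constructor
    · rintro (⟨_,h⟩|⟨_,h⟩|⟨h,_⟩|⟨_,h⟩|⟨h,_⟩|⟨_,h⟩|⟨h,_⟩|⟨_,h⟩) <;> tauto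
    · rintro (h | h) <;> tauto
  · refine ⟨b, stdv d 0 + stdv d 1 + b, n2, ?_⟩
    ext v
    simp only [Set.mem_setOf_eq, cycAdj, Set.mem_insert_iff, Set.mem_singleton_iff, hu]
    constructor
    · rintro (⟨h,_⟩|⟨_,h⟩|⟨_,h⟩|⟨_,h⟩|⟨h,_⟩|⟨_,h⟩|⟨h,_⟩|⟨_,h⟩) <;> tauto
    · rintro (h | h) <;> tauto
  · refine ⟨stdv d 1 + b, stdv d 0 + b, n5, ?_⟩
    ext v
    simp only [Set.mem_setOf_eq, cycAdj, Set.mem_insert_iff, Set.mem_singleton_iff, hu]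
    constructor
    · rintro (⟨h,_⟩|⟨_,h⟩|⟨h,_⟩|⟨_,h⟩|⟨_,h⟩|⟨_,h⟩|⟨h,_⟩|⟨_,h⟩) <;> tauto
    · rintro (h | h) <;> tauto
  · rw [Set.mem_singleton_iff] at hu
    refine ⟨stdv d 0 + stdv d 1 + b, b, (Ne.symm n2), ?_⟩
    ext v
    simp only [Set.mem_setOf_eq, cycAdj, Set.mem_insert_iff, Set.mem_singleton_iff, hu]
    constructor
    · rintro (⟨h,_⟩|⟨_,h⟩|⟨h,_⟩|⟨_,h⟩|⟨_,h⟩|⟨_,h⟩|⟨_,h⟩|⟨_,h⟩) <;> tauto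
    · rintro (h | h) <;> tauto

lemma sqV_finite (b : Vtx d) : (sqV d b).Finite := by
  unfold sqV
  exact (Set.finite_singleton _).insert _ |>.insert _ |>.insert _

end PRB

namespace PRB
open SimpleGraph
variable {d : ℕ}

lemma numLoops_set_eq (τ : (latticeGraph d).Subgraph) :
    {C : τ.spanningCoe.ConnectedComponent | ∃ e ∈ τ.edgeSet, ∀ v ∈ e, v ∈ C.supp} =
    {C | ∃ u ∈ τ.support, τ.spanningCoe.connectedComponentMk u = C} := by
  ext C
  constructor
  · rintro ⟨e, he, hs⟩
    induction e with
    | _ u v =>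
      rw [Subgraph.mem_edgeSet] at he
      refine ⟨u, Subgraph.mem_support τ |>.2 ⟨v, he⟩, ?_⟩
      exact (ConnectedComponent.mem_supp_iff C u).1 (hs u (Sym2.mem_mk_left u v))
  · rintro ⟨u, hu, hC⟩
    obtain ⟨v, huv⟩ := (Subgraph.mem_support τ).1 hu
    refine ⟨s(u, v), Subgraph.mem_edgeSet.2 huv, ?_⟩
    intro w hw
    rcases Sym2.mem_iff.1 hw with rfl | rfl
    · exact (ConnectedComponent.mem_supp_iff C w).2 hC
    · refine (ConnectedComponent.mem_supp_iff C w).2 ?_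
      rw [← hC]
      exact (ConnectedComponent.eq).2
        ((Adj.reachable (by rw [Subgraph.spanningCoe_adj]; exact huv)).symm)

lemma addSquare_edgeSet {τ τ' : (latticeGraph d).Subgraph} {b : Vtx d}
    (hAdj : ∀ u v, τ'.Adj u v ↔ τ.Adj u v ∨ cycAdj d b u v) :
    τ'.edgeSet = τ.edgeSet ∪ sqE d b := by
  ext e
  induction e with
  | _ u v =>
    simp only [Set.mem_union, Subgraph.mem_edgeSet, hAdj u v, cycAdj_iff_sqE]

lemma addSquare_edgeCount (hd : 2 ≤ d) {τ τ' : (latticeGraph d).Subgraph} {b : Vtx d}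
    (hAdj : ∀ u v, τ'.Adj u v ↔ τ.Adj u v ∨ cycAdj d b u v)
    (hAv : ∀ u v, τ.Adj u v → u ∉ sqV d b)
    (hfin : τ.edgeSet.Finite) :
    τ'.edgeSet.ncard = τ.edgeSet.ncard + 4 := by
  rw [addSquare_edgeSet hAdj,
    Set.ncard_union_eq ?_ hfin (sqE_finite b), sqE_ncard hd b]
  rw [Set.disjoint_left]
  intro e he hsq
  induction e with
  | _ u v =>
    exact hAv u v (Subgraph.mem_edgeSet.1 he) (cycAdj_mem_left (cycAdj_iff_sqE.2 hsq))

lemma addSquare_numLoops (hd : 2 ≤ d) {τ τ' : (latticeGraph d).Subgraph} {b : Vtx d}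
    (hAdj : ∀ u v, τ'.Adj u v ↔ τ.Adj u v ∨ cycAdj d b u v)
    (hAv : ∀ u v, τ.Adj u v → u ∉ sqV d b)
    (hsup : τ.support.Finite) :
    numLoops τ' = numLoops τ + 1 := by
  classical
  have hle : τ.spanningCoe ≤ τ'.spanningCoe := by
    intro u v h
    rw [Subgraph.spanningCoe_adj] at h ⊢
    exact (hAdj u v).2 (Or.inl h)
  -- separation
  have key : ∀ (u v : Vtx d), τ'.spanningCoe.Walk u v → u ∉ sqV d b →
      τ.spanningCoe.Reachable u v ∧ v ∉ sqV d b := by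
    intro u v w
    induction w with
    | nil => exact fun hu => ⟨Reachable.refl _, hu⟩
    | cons h p ih =>
      intro hu
      rw [Subgraph.spanningCoe_adj, hAdj] at h
      rcases h with h | h
      · have hu' := hAv _ _ h.symm
        obtain ⟨r, hv⟩ := ih hu'
        refine ⟨Reachable.trans (Adj.reachable ?_) r, hv⟩
        rw [Subgraph.spanningCoe_adj]; exact h
      · exact absurd (cycAdj_mem_left h) hu
  have reach_off : ∀ {u v : Vtx d}, τ'.spanningCoe.Reachable u v → u ∉ sqV d b →
      τ.spanningCoe.Reachable u v ∧ v ∉ sqV d b := by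
    intro u v h hu
    obtain ⟨w⟩ := h
    exact key u v w hu
  -- square connectivity
  have a1 : τ'.spanningCoe.Adj b (stdv d 1 + b) := by
    rw [Subgraph.spanningCoe_adj]
    exact (hAdj _ _).2 (Or.inr (Or.inl ⟨rfl, rfl⟩))
  have a2 : τ'.spanningCoe.Adj (stdv d 1 + b) (stdv d 0 + stdv d 1 + b) := by
    rw [Subgraph.spanningCoe_adj]
    exact (hAdj _ _).2 (Or.inr (Or.inr (Or.inr (Or.inl ⟨rfl, rfl⟩))))
  have a3 : τ'.spanningCoe.Adj b (stdv d 0 + b) := by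
    rw [Subgraph.spanningCoe_adj]
    exact (hAdj _ _).2 (Or.inr (Or.inr (Or.inr (Or.inr (Or.inr (Or.inr (Or.inr
      (Or.inr ⟨rfl, rfl⟩))))))))
  have hr : ∀ u ∈ sqV d b, τ'.spanningCoe.Reachable b u := by
    intro u hu
    rcases hu with rfl | rfl | rfl | rfl
    · exact Reachable.refl _
    · exact a1.reachable
    · exact a1.reachable.trans a2.reachable
    · exact a3.reachable
  set φ : τ.spanningCoe.ConnectedComponent → τ'.spanningCoe.ConnectedComponent :=
    ConnectedComponent.map (Hom.ofLE hle) with hφ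
  have hφmk : ∀ u : Vtx d, φ (τ.spanningCoe.connectedComponentMk u)
      = τ'.spanningCoe.connectedComponentMk u := fun u =>
    ConnectedComponent.map_mk _ u
  have e1 : numLoops τ
      = Set.ncard {C | ∃ u ∈ τ.support, τ.spanningCoe.connectedComponentMk u = C} := by
    unfold numLoops; rw [numLoops_set_eq]
  have e2 : numLoops τ'
      = Set.ncard {C | ∃ u ∈ τ'.support, τ'.spanningCoe.connectedComponentMk u = C} := by
    unfold numLoops; rw [numLoops_set_eq]
  rw [e1, e2]
  set Ls : Set (τ.spanningCoe.ConnectedComponent) :=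
    {C | ∃ u ∈ τ.support, τ.spanningCoe.connectedComponentMk u = C} with hLs
  set Ls' : Set (τ'.spanningCoe.ConnectedComponent) :=
    {C | ∃ u ∈ τ'.support, τ'.spanningCoe.connectedComponentMk u = C} with hLs'
  have hLfin : Ls.Finite := by
    refine (hsup.image (fun u => τ.spanningCoe.connectedComponentMk u)).subset ?_
    rintro C ⟨u, hu, hC⟩
    exact ⟨u, hu, hC⟩
  have hnotA : ∀ u : Vtx d, u ∈ τ.support → u ∉ sqV d b := by
    intro u hu
    obtain ⟨v, hv⟩ := (Subgraph.mem_support τ).1 hu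
    exact hAv u v hv
  have hinj : Set.InjOn φ Ls := by
    rintro C1 ⟨u1, hu1, rfl⟩ C2 ⟨u2, hu2, rfl⟩ h
    rw [hφmk, hφmk] at h
    exact ConnectedComponent.eq.2
      (reach_off (ConnectedComponent.eq.1 h) (hnotA u1 hu1)).1
  have hbmem : τ'.spanningCoe.connectedComponentMk b ∉ φ '' Ls := by
    rintro ⟨C, ⟨u, hu, rfl⟩, h⟩
    rw [hφmk] at h
    exact (reach_off (ConnectedComponent.eq.1 h) (hnotA u hu)).2 (Or.inl rfl)
  have hset : Ls' = insert (τ'.spanningCoe.connectedComponentMk b) (φ '' Ls) := by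
    ext C
    constructor
    · rintro ⟨u, hu, rfl⟩
      obtain ⟨v, hv⟩ := (Subgraph.mem_support τ').1 hu
      rw [hAdj] at hv
      rcases hv with hv | hv
      · exact Set.mem_insert_iff.2 (Or.inr
          ⟨τ.spanningCoe.connectedComponentMk u,
            ⟨u, (Subgraph.mem_support τ).2 ⟨v, hv⟩, rfl⟩, hφmk u⟩)
      · exact Set.mem_insert_iff.2 (Or.inl
          (ConnectedComponent.eq.2 ((hr u (cycAdj_mem_left hv)).symm)))
    · intro hC
      rcases Set.mem_insert_iff.1 hC with rfl | ⟨C0, ⟨u, hu, rfl⟩, rfl⟩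
      · refine ⟨b, (Subgraph.mem_support τ').2 ⟨stdv d 1 + b, ?_⟩, rfl⟩
        rw [← Subgraph.spanningCoe_adj]; exact a1
      · obtain ⟨v, hv⟩ := (Subgraph.mem_support τ).1 hu
        refine ⟨u, (Subgraph.mem_support τ').2 ⟨v, (hAdj u v).2 (Or.inl hv)⟩, (hφmk u)⟩
  rw [hset, Set.ncard_insert_of_notMem hbmem (hLfin.image φ),
    Set.ncard_image_of_injOn hinj]

end PRB

namespace PRB
open SimpleGraph
variable {d : ℕ}

lemma support_finite {G τ : (latticeGraph d).Subgraph} (hτ : τ ≤ G)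
    (hG : G.verts.Finite) (hv : τ.verts = G.verts) : τ.support.Finite := by
  refine hG.subset ?_
  intro u hu
  obtain ⟨v, hvv⟩ := (Subgraph.mem_support τ).1 hu
  rw [← hv]
  exact τ.edge_vert hvv

lemma edgeSet_finite {G : (latticeGraph d).Subgraph} (hG : G.verts.Finite) :
    G.edgeSet.Finite := by
  refine ((hG.prod hG).image (fun p => s(p.1, p.2))).subset ?_
  intro e he
  induction e with
  | _ u v =>
    rw [Subgraph.mem_edgeSet] at he
    exact ⟨(u, v), ⟨G.edge_vert he, G.edge_vert he.symm⟩, rfl⟩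

lemma edgeSet_subset_of_le {τ G : (latticeGraph d).Subgraph} (h : τ ≤ G) :
    τ.edgeSet ⊆ G.edgeSet := by
  intro e he
  induction e with
  | _ u v =>
    rw [Subgraph.mem_edgeSet] at he ⊢
    exact h.2 he

lemma loopConfigs_finite {G : (latticeGraph d).Subgraph} (hG : G.verts.Finite) :
    (loopConfigs G).Finite := by
  have himg : (Subgraph.edgeSet '' loopConfigs G).Finite := by
    refine (edgeSet_finite hG).finite_subsets.subset ?_
    rintro s ⟨κ, hκ, rfl⟩
    exact edgeSet_subset_of_le hκ.1
  refine Set.Finite.of_finite_image himg ?_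
  rintro κ1 hκ1 κ2 hκ2 h
  ext u v
  · rw [hκ1.2.1, hκ2.2.1]
  · rw [← Subgraph.mem_edgeSet, ← Subgraph.mem_edgeSet, h]

lemma loopWt_nonneg {lam n : ℝ} (hlam : 0 < lam) (hn : 0 < n)
    (κ : (latticeGraph d).Subgraph) : 0 ≤ loopWt lam n κ :=
  mul_nonneg (pow_nonneg hlam.le _) (pow_nonneg hn.le _)

lemma partitionZ_eq_sum {lam n : ℝ} {G : (latticeGraph d).Subgraph}
    (hfin : (loopConfigs G).Finite) :
    partitionZ lam n G = ∑ κ ∈ hfin.toFinset, loopWt lam n κ := by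
  unfold partitionZ
  rw [tsum_subtype]
  rw [tsum_eq_sum (s := hfin.toFinset)
    (fun κ hκ => Set.indicator_of_notMem (by simpa using hκ) _)]
  exact Finset.sum_congr rfl fun κ hκ =>
    Set.indicator_of_mem (by simpa using hκ) _

lemma partitionZ_pos {lam n : ℝ} (hlam : 0 < lam) (hn : 0 < n)
    {G : (latticeGraph d).Subgraph} (hG : G.verts.Finite) :
    0 < partitionZ lam n G := by
  have hfin := loopConfigs_finite (G := G) hG
  rw [partitionZ_eq_sum hfin]
  -- the empty configuration
  have hempty : (⟨G.verts, fun _ _ => False, fun {_ _} h => h.elim, fun {_ _} h => h.elim,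
      ⟨fun _ _ h => h.elim⟩⟩ : (latticeGraph d).Subgraph) ∈ loopConfigs G := by
    refine ⟨⟨subset_rfl, fun {_ _} h => h.elim⟩, rfl, ?_⟩
    intro v _
    left
    convert Set.ncard_empty (Vtx d)
    exact Set.eq_empty_iff_forall_notMem.2 fun w hw => hw
  set κ0 : (latticeGraph d).Subgraph := ⟨G.verts, fun _ _ => False, fun {_ _} h => h.elim,
    fun {_ _} h => h.elim, ⟨fun _ _ h => h.elim⟩⟩ with hκ0
  have h1 : loopWt lam n κ0 > 0 := by
    unfold loopWt
    exact mul_pos (pow_pos hlam _) (pow_pos hn _)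
  refine lt_of_lt_of_le h1 (Finset.single_le_sum
    (fun κ _ => loopWt_nonneg hlam hn κ) (by simpa using hempty))

end PRB

namespace PRB
open SimpleGraph
variable {d : ℕ}

lemma occ_data {N : ℕ} {ω : Fin N → Vtx d} {j : ℕ} (h : occursAt (patternP' d) ω j) :
    ∃ hj : j + 4 ≤ N,
      ω ⟨j + 1, by omega⟩ = stdv d 1 + ω ⟨j, by omega⟩ ∧
      ω ⟨j + 2, by omega⟩ = stdv d 0 + stdv d 1 + ω ⟨j, by omega⟩ ∧
      ω ⟨j + 3, by omega⟩ = stdv d 0 + ω ⟨j, by omega⟩ := by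
  obtain ⟨hle, v, hk⟩ := h
  have hj : j + 4 ≤ N := hle
  refine ⟨hj, ?_⟩
  have hk' : ∀ k : Fin 4, ω ⟨j + k.1, by have := k.2; omega⟩ = (patternP' d).p k + v :=
    fun k => hk k
  have h0 := hk' ⟨0, by omega⟩
  have h1 := hk' ⟨1, by omega⟩
  have h2 := hk' ⟨2, by omega⟩
  have h3 := hk' ⟨3, by omega⟩
  have p0 : (patternP' d).p (⟨0, by omega⟩ : Fin 4) = 0 := rfl
  have p1 : (patternP' d).p (⟨1, by omega⟩ : Fin 4) = stdv d 1 := rfl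
  have p2 : (patternP' d).p (⟨2, by omega⟩ : Fin 4) = stdv d 0 + stdv d 1 := rfl
  have p3 : (patternP' d).p (⟨3, by omega⟩ : Fin 4) = stdv d 0 := rfl
  rw [p0, zero_add] at h0
  rw [p1] at h1
  rw [p2] at h2
  rw [p3] at h3
  have e0 : (⟨j + 0, by omega⟩ : Fin N) = ⟨j, by omega⟩ := rfl
  rw [e0] at h0
  rw [← h0] at h1 h2 h3
  exact ⟨h1, h2, h3⟩

lemma occ_gap (hd : 2 ≤ d) {N : ℕ} {ω : Fin N → Vtx d} (hinj : Function.Injective ω)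
    {j j' : ℕ} (hj : occursAt (patternP' d) ω j) (hj' : occursAt (patternP' d) ω j')
    (hlt : j < j') (hlt4 : j' < j + 4) : False := by
  have h0d : (0:ℕ) < d := by omega
  have h1d : (1:ℕ) < d := by omega
  obtain ⟨ha, e1j, e2j, e3j⟩ := occ_data hj
  obtain ⟨hb, e1j', e2j', e3j'⟩ := occ_data hj'
  have hcase : j' = j + 1 ∨ j' = j + 2 ∨ j' = j + 3 := by omega
  rcases hcase with rfl | rfl | rfl
  · -- j' = j + 1
    have ha1 : (⟨j + 1 + 1, by omega⟩ : Fin N) = ⟨j + 2, by omega⟩ := rfl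
    rw [ha1] at e1j'
    rw [e2j, e1j] at e1j'
    have := congrFun e1j' ⟨0, h0d⟩
    simp [stdv, Pi.add_apply] at this <;> omega
  · -- j' = j + 2
    have ha1 : (⟨j + 2 + 1, by omega⟩ : Fin N) = ⟨j + 3, by omega⟩ := rfl
    rw [ha1] at e1j'
    rw [e3j, e2j] at e1j'
    have := congrFun e1j' ⟨1, h1d⟩
    simp [stdv, Pi.add_apply] at this <;> omega
  · -- j' = j + 3
    have ha1 : (⟨j + 3 + 1, by omega⟩ : Fin N) = ⟨j + 4, by omega⟩ := rfl
    rw [ha1] at e1j'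
    rw [e3j] at e1j'
    have hv : stdv d 1 + (stdv d 0 + ω ⟨j, by omega⟩)
        = stdv d 0 + stdv d 1 + ω ⟨j, by omega⟩ := by ring
    rw [hv, ← e2j] at e1j'
    have := congrArg Fin.val (hinj e1j')
    simp at this <;> omega

lemma occ_far (hd : 2 ≤ d) {N : ℕ} {ω : Fin N → Vtx d} (hinj : Function.Injective ω)
    {j j' : ℕ} (hj : occursAt (patternP' d) ω j) (hj' : occursAt (patternP' d) ω j')
    (hne : j ≠ j') : j + 4 ≤ j' ∨ j' + 4 ≤ j := by
  rcases Nat.lt_or_ge j j' with h | h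
  · left
    by_contra hc
    exact occ_gap hd hinj hj hj' h (by omega)
  · right
    by_contra hc
    exact occ_gap hd hinj hj' hj (by omega) (by omega)

lemma occ_sq_mem {N : ℕ} {ω : Fin N → Vtx d} {j : ℕ} (hj : occursAt (patternP' d) ω j)
    (hjN : j + 4 ≤ N) :
    ∀ w ∈ sqV d (ω ⟨j, by omega⟩), ∃ (k : ℕ) (h : j + k < N), k ≤ 3 ∧ w = ω ⟨j + k, h⟩ := by
  obtain ⟨ha, e1, e2, e3⟩ := occ_data hj
  intro w hw
  rcases hw with rfl | rfl | rfl | rfl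
  · exact ⟨0, by omega, by omega, rfl⟩
  · exact ⟨1, by omega, by omega, e1.symm⟩
  · exact ⟨2, by omega, by omega, e2.symm⟩
  · exact ⟨3, by omega, by omega, e3.symm⟩

lemma occ_sq_disjoint (hd : 2 ≤ d) {N : ℕ} {ω : Fin N → Vtx d}
    (hinj : Function.Injective ω) {j j' : ℕ}
    (hj : occursAt (patternP' d) ω j) (hj' : occursAt (patternP' d) ω j') (hne : j ≠ j')
    (hjN : j + 4 ≤ N) (hj'N : j' + 4 ≤ N) :
    Disjoint (sqV d (ω ⟨j, by omega⟩)) (sqV d (ω ⟨j', by omega⟩)) := by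
  rw [Set.disjoint_left]
  intro w hw hw'
  obtain ⟨k, h, hk3, rfl⟩ := occ_sq_mem hj hjN w hw
  obtain ⟨k', h', hk3', heq⟩ := occ_sq_mem hj' hj'N _ hw'
  have := congrArg Fin.val (hinj heq)
  simp at this
  rcases occ_far hd hinj hj hj' hne with hfar | hfar <;> omega

end PRB

namespace PRB
open SimpleGraph
variable {d : ℕ}

/-- Add the unit squares at `b j`, `j ∈ S`, to the configuration `κ`, as a spanning
subgraph of `G`. -/
def addSqs (hd : 2 ≤ d) (G κ : (latticeGraph d).Subgraph) (b : ℕ → Vtx d) (S : Finset ℕ)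
    (hκG : κ ≤ G) (hb : ∀ j ∈ S, sqV d (b j) ⊆ G.verts) : (latticeGraph d).Subgraph where
  verts := G.verts
  Adj u v := κ.Adj u v ∨ ∃ j ∈ S, cycAdj d (b j) u v
  adj_sub := by
    rintro u v (h | ⟨j, hj, h⟩)
    · exact κ.adj_sub h
    · exact cycAdj_latAdj hd h
  edge_vert := by
    rintro u v (h | ⟨j, hj, h⟩)
    · exact hκG.1 (κ.edge_vert h)
    · exact hb j hj (cycAdj_mem_left h)
  symm := by
    constructor
    rintro u v (h | ⟨j, hj, h⟩)
    · exact Or.inl h.symm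
    · exact Or.inr ⟨j, hj, cycAdj_symm h⟩

lemma addSqs_adj {hd : 2 ≤ d} {G κ : (latticeGraph d).Subgraph} {b : ℕ → Vtx d}
    {S : Finset ℕ} {hκG : κ ≤ G} {hb : ∀ j ∈ S, sqV d (b j) ⊆ G.verts} {u v : Vtx d} :
    (addSqs hd G κ b S hκG hb).Adj u v ↔ κ.Adj u v ∨ ∃ j ∈ S, cycAdj d (b j) u v :=
  Iff.rfl

lemma addSqs_le (hd : 2 ≤ d) (G κ : (latticeGraph d).Subgraph) (b : ℕ → Vtx d)
    (S : Finset ℕ) (hκG : κ ≤ G) (hb : ∀ j ∈ S, sqV d (b j) ⊆ G.verts)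
    (hGdom : IsFiniteDomain G) :
    addSqs hd G κ b S hκG hb ≤ G := by
  constructor
  · exact subset_rfl
  · rintro u v (h | ⟨j, hj, h⟩)
    · exact hκG.2 h
    · exact hGdom.2 u (hb j hj (cycAdj_mem_left h)) v (hb j hj (cycAdj_mem_right h))
        (cycAdj_latAdj hd h)

/-- weights only depend on the adjacency relation -/
lemma loopWt_congr {lam n : ℝ} {τ τ' : (latticeGraph d).Subgraph}
    (h : ∀ u v, τ.Adj u v ↔ τ'.Adj u v) : loopWt lam n τ = loopWt lam n τ' := by
  have hsp : τ.spanningCoe = τ'.spanningCoe := by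
    ext u v
    rw [Subgraph.spanningCoe_adj, Subgraph.spanningCoe_adj]
    exact h u v
  have hedge : τ.edgeSet = τ'.edgeSet := by
    ext e
    induction e with
    | _ u v => rw [Subgraph.mem_edgeSet, Subgraph.mem_edgeSet]; exact h u v
  unfold loopWt numLoops
  rw [hedge, hsp]

section main
variable (hd : 2 ≤ d) (G P κ : (latticeGraph d).Subgraph) (b : ℕ → Vtx d)
  (J : Finset ℕ)
  (hbP : ∀ j ∈ J, sqV d (b j) ⊆ P.verts)
  (hdisj : ∀ j ∈ J, ∀ j' ∈ J, j ≠ j' → Disjoint (sqV d (b j)) (sqV d (b j')))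
  (hGdom : IsFiniteDomain G) (hPG : P ≤ G)
  (hκ : κ ∈ loopConfigs (graphDiff G P))

omit hbP hdisj hGdom hPG in
include hκ in
lemma κ_not_P : ∀ u v : Vtx d, κ.Adj u v → u ∉ P.verts := by
  intro u v h
  have h' : G.Adj u v ∧ u ∉ P.verts ∧ v ∉ P.verts := hκ.1.2 h
  exact h'.2.1

omit hbP hdisj hGdom hPG in
include hκ in
lemma κ_le_G : κ ≤ G := by
  refine le_trans hκ.1 ?_
  constructor
  · exact (Set.diff_subset : G.verts \ P.verts ⊆ G.verts)
  · intro u v h'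
    exact (show G.Adj u v ∧ u ∉ P.verts ∧ v ∉ P.verts from h').1

omit hdisj hGdom hκ in
include hPG hbP in
lemma hb_of_S {S : Finset ℕ} (hSJ : S ⊆ J) : ∀ j ∈ S, sqV d (b j) ⊆ G.verts :=
  fun j hj => (hbP j (hSJ hj)).trans hPG.1

include hbP hdisj hGdom hPG hκ in
lemma addSqs_mem {S : Finset ℕ} (hSJ : S ⊆ J) :
    addSqs hd G κ b S (κ_le_G G P κ hκ) (hb_of_S G P b J hbP hPG hSJ) ∈ loopConfigs G := by
  classical
  set τ := addSqs hd G κ b S (κ_le_G G P κ hκ) (hb_of_S G P b J hbP hPG hSJ) with hτ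
  refine ⟨addSqs_le _ _ _ _ _ _ _ hGdom, rfl, ?_⟩
  intro v hv
  by_cases hvP : v ∈ P.verts
  · by_cases hvS : ∃ j ∈ S, v ∈ sqV d (b j)
    · obtain ⟨j, hj, hvj⟩ := hvS
      obtain ⟨w1, w2, hw, hnbr⟩ := cyc_nbrs hd (b j) v hvj
      right
      have hset : τ.neighborSet v = {w1, w2} := by
        ext u
        rw [Subgraph.mem_neighborSet]
        constructor
        · rintro (h | ⟨j', hj', h⟩)
          · exact absurd hvP (κ_not_P G P κ hκ v u h)
          · by_cases hjj : j' = j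
            · subst hjj
              rw [← hnbr]
              exact h
            · exfalso
              exact Set.disjoint_left.1
                (hdisj j (hSJ hj) j' (hSJ hj') (fun hc => hjj hc.symm)) hvj
                (cycAdj_mem_left h)
        · intro hu
          right
          refine ⟨j, hj, ?_⟩
          rw [← hnbr] at hu
          exact hu
      rw [hset, Set.ncard_pair hw]
    · left
      have hset : τ.neighborSet v = ∅ := by
        ext u
        rw [Subgraph.mem_neighborSet]
        simp only [Set.mem_empty_iff_false, iff_false]
        rintro (h | ⟨j', hj', h⟩)
        · exact absurd hvP (κ_not_P G P κ hκ v u h)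
        · exact hvS ⟨j', hj', cycAdj_mem_left h⟩
      rw [hset, Set.ncard_empty]
  · have hset : τ.neighborSet v = κ.neighborSet v := by
      ext u
      rw [Subgraph.mem_neighborSet, Subgraph.mem_neighborSet]
      constructor
      · rintro (h | ⟨j', hj', h⟩)
        · exact h
        · exact absurd (hbP j' (hSJ hj') (cycAdj_mem_left h)) hvP
      · exact fun h => Or.inl h
    rw [hset]
    refine hκ.2.2 v ?_
    rw [hκ.2.1]
    exact (show v ∈ G.verts \ P.verts from ⟨hv, hvP⟩)

include hbP hdisj hGdom hPG hκ in
lemma addSqs_wt {lam n : ℝ} :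
    ∀ (S : Finset ℕ) (hSJ : S ⊆ J),
      loopWt lam n (addSqs hd G κ b S (κ_le_G G P κ hκ) (hb_of_S G P b J hbP hPG hSJ))
        = loopWt lam n κ * (lam ^ 4 * n) ^ S.card := by
  classical
  intro S
  induction S using Finset.induction_on with
  | empty =>
    intro _
    rw [Finset.card_empty, pow_zero, mul_one]
    refine loopWt_congr ?_
    intro u v
    rw [addSqs_adj]
    simp
  | @insert j S hjS ih =>
    intro hSJ
    have hSJ' : S ⊆ J := (Finset.subset_insert j S).trans hSJ
    have hjJ : j ∈ J := hSJ (Finset.mem_insert_self j S)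
    set τ := addSqs hd G κ b S (κ_le_G G P κ hκ) (hb_of_S G P b J hbP hPG hSJ') with hτdef
    set τ' := addSqs hd G κ b (insert j S) (κ_le_G G P κ hκ)
      (hb_of_S G P b J hbP hPG hSJ) with hτ'def
    have hAdj : ∀ u v, τ'.Adj u v ↔ τ.Adj u v ∨ cycAdj d (b j) u v := by
      intro u v
      rw [hτdef, hτ'def, addSqs_adj, addSqs_adj]
      simp only [Finset.mem_insert]
      constructor
      · rintro (h | ⟨j', (rfl | hj'), h'⟩)
        · exact Or.inl (Or.inl h)
        · exact Or.inr h'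
        · exact Or.inl (Or.inr ⟨j', hj', h'⟩)
      · rintro ((h | ⟨j', hj', h'⟩) | h)
        · exact Or.inl h
        · exact Or.inr ⟨j', Or.inr hj', h'⟩
        · exact Or.inr ⟨j, Or.inl rfl, h⟩
    have hAv : ∀ u v, τ.Adj u v → u ∉ sqV d (b j) := by
      intro u v h
      rcases h with h | ⟨j', hj', h⟩
      · intro hc
        exact (κ_not_P G P κ hκ u v h) (hbP j hjJ hc)
      · intro hc
        have hne : j' ≠ j := fun hc' => hjS (hc' ▸ hj')
        exact Set.disjoint_left.1 (hdisj j' (hSJ' hj') j hjJ hne)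
          (cycAdj_mem_left h) hc
    have hτle : τ ≤ G := addSqs_le _ _ _ _ _ _ _ hGdom
    have hsup : τ.support.Finite := support_finite hτle hGdom.1 rfl
    have hEfin : τ.edgeSet.Finite := (edgeSet_finite hGdom.1).subset (edgeSet_subset_of_le hτle)
    have hEc := addSquare_edgeCount hd hAdj hAv hEfin
    have hLc := addSquare_numLoops hd hAdj hAv hsup
    unfold loopWt
    rw [hEc, hLc, Finset.card_insert_of_notMem hjS]
    unfold loopWt at ih
    have hthis := ih hSJ'
    rw [pow_add, pow_add, pow_succ]
    linear_combination (lam ^ 4 * n) * hthis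

end main
end PRB

namespace PRB
open SimpleGraph
variable {d : ℕ}

section inja
variable (hd : 2 ≤ d) (G P : (latticeGraph d).Subgraph) (b : ℕ → Vtx d)
  (J : Finset ℕ)
  (hbP : ∀ j ∈ J, sqV d (b j) ⊆ P.verts)
  (hdisj : ∀ j ∈ J, ∀ j' ∈ J, j ≠ j' → Disjoint (sqV d (b j)) (sqV d (b j')))
  (hPG : P ≤ G)

include hbP hdisj hPG in
lemma addSqs_injective {κ κ' : (latticeGraph d).Subgraph} {S S' : Finset ℕ}
    (hκ : κ ∈ loopConfigs (graphDiff G P)) (hκ' : κ' ∈ loopConfigs (graphDiff G P))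
    (hSJ : S ⊆ J) (hS'J : S' ⊆ J)
    (h : addSqs hd G κ b S (κ_le_G G P κ hκ) (hb_of_S G P b J hbP hPG hSJ)
        = addSqs hd G κ' b S' (κ_le_G G P κ' hκ') (hb_of_S G P b J hbP hPG hS'J)) :
    κ = κ' ∧ S = S' := by
  set τ := addSqs hd G κ b S (κ_le_G G P κ hκ) (hb_of_S G P b J hbP hPG hSJ) with hτ
  set τ' := addSqs hd G κ' b S' (κ_le_G G P κ' hκ') (hb_of_S G P b J hbP hPG hS'J) with hτ'
  have hstep : ∀ (σ σ' : Finset ℕ) (μ μ' : (latticeGraph d).Subgraph)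
      (hμ : μ ∈ loopConfigs (graphDiff G P)) (hμ' : μ' ∈ loopConfigs (graphDiff G P))
      (hσ : σ ⊆ J) (hσ' : σ' ⊆ J)
      (heq : ∀ u v, (κ.Adj u v ∨ ∃ j ∈ σ, cycAdj d (b j) u v)
          → (μ'.Adj u v ∨ ∃ j ∈ σ', cycAdj d (b j) u v)), True := fun _ _ _ _ _ _ _ _ _ => trivial
  clear hstep
  have hadj : ∀ u v, (κ.Adj u v ∨ ∃ j ∈ S, cycAdj d (b j) u v)
      ↔ (κ'.Adj u v ∨ ∃ j ∈ S', cycAdj d (b j) u v) := by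
    intro u v
    have h1 : τ.Adj u v ↔ τ'.Adj u v := by rw [h]
    exact h1
  have hSsub : ∀ (A A' : Finset ℕ) (μ μ' : (latticeGraph d).Subgraph),
      μ ∈ loopConfigs (graphDiff G P) → A ⊆ J → A' ⊆ J →
      (∀ u v, (μ.Adj u v ∨ ∃ j ∈ A, cycAdj d (b j) u v)
        → (μ'.Adj u v ∨ ∃ j ∈ A', cycAdj d (b j) u v)) →
      (∀ u v, μ'.Adj u v → u ∉ P.verts) → A ⊆ A' := by
    intro A A' μ μ' hμ hAJ hA'J himp hμ'P
    intro j hj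
    have hadjj : μ.Adj (b j) (stdv d 1 + b j) ∨ ∃ j' ∈ A, cycAdj d (b j') (b j) (stdv d 1 + b j) :=
      Or.inr ⟨j, hj, Or.inl ⟨rfl, rfl⟩⟩
    rcases himp _ _ hadjj with hc | ⟨j', hj', hc⟩
    · exact absurd (hbP j (hAJ hj) (Or.inl rfl)) (hμ'P _ _ hc)
    · by_cases hjj : j = j'
      · exact hjj ▸ hj'
      · exact absurd (Or.inl rfl : b j ∈ sqV d (b j))
          (Set.disjoint_left.1 (hdisj j' (hA'J hj') j (hAJ hj) (fun hc' => hjj hc'.symm))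
            (cycAdj_mem_left hc))
  have hSS' : S = S' := by
    refine Finset.Subset.antisymm ?_ ?_
    · exact hSsub S S' κ κ' hκ hSJ hS'J (fun u v hh => (hadj u v).1 hh) (κ_not_P G P κ' hκ')
    · exact hSsub S' S κ' κ hκ' hS'J hSJ (fun u v hh => (hadj u v).2 hh) (κ_not_P G P κ hκ)
  refine ⟨?_, hSS'⟩
  ext u v
  · rw [hκ.2.1, hκ'.2.1]
  · constructor
    · intro hκuv
      rcases (hadj u v).1 (Or.inl hκuv) with hc | ⟨j', hj', hc⟩
      · exact hc
      · exact absurd (hbP j' (hS'J hj') (cycAdj_mem_left hc)) (κ_not_P G P κ hκ u v hκuv)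
    · intro hκuv
      rcases (hadj u v).2 (Or.inl hκuv) with hc | ⟨j', hj', hc⟩
      · exact hc
      · exact absurd (hbP j' (hSJ hj') (cycAdj_mem_left hc)) (κ_not_P G P κ' hκ' u v hκuv)

end inja
end PRB

open PRB

/-- If the pattern `P'` occurs at `aN` or more steps of the `N`-step self-avoiding polygon
`P ⊆ G`, then `Z_{λ,n}(G ∖ P) / Z_{λ,n}(G) ≤ (1 + λ⁴ n)^{-aN}`. -/
theorem partition_ratio_bound (d : ℕ) (hd : 2 ≤ d)
    (a : ℝ) (ha0 : 0 < a) (ha1 : a < 1) (N : ℕ)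
    (f : (y : Vtx d) → (M : ℕ) → (latticeGraph d).Subgraph → Fin M → Vtx d)
    (hf : ∀ (y : Vtx d) (M : ℕ) (Q : (latticeGraph d).Subgraph),
      1 < M → IsSAP y M Q → Traces y M Q (f y M Q))
    (G : (latticeGraph d).Subgraph) (hG : IsFiniteDomain G)
    (x : Vtx d) (hx : x ∈ G.verts)
    (P : (latticeGraph d).Subgraph) (hP : IsSAP x N P) (hPG : P ≤ G)
    (hocc : a * (N : ℝ) ≤ (numOcc (patternP' d) (f x N P) : ℝ))
    (lam n : ℝ) (hlam : 0 < lam) (hn : 0 < n) :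
    partitionZ lam n (graphDiff G P) / partitionZ lam n G
      ≤ 1 / (1 + lam ^ 4 * n) ^ (a * (N : ℝ)) := by
  classical
  have hN : 4 ≤ N := by
    rcases hP with ⟨hN1, -, -⟩ | ⟨h4, -⟩
    · exfalso
      subst hN1
      have hempty : {j : ℕ | occursAt (patternP' d) (f x 1 P) j} = ∅ := by
        ext j
        simp only [Set.mem_setOf_eq, Set.mem_empty_iff_false, iff_false]
        rintro ⟨hle, -⟩
        have hlen : (patternP' d).len = 3 := rfl
        omega
      rw [numOcc, hempty, Set.ncard_empty] at hocc
      norm_num at hocc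
      nlinarith
    · exact h4
  set ω := f x N P with hω
  have hT := hf x N P (by omega) hP
  have hinj : Function.Injective ω := hT.1.2.1
  have hrange : ∀ v, v ∈ P.verts ↔ ∃ i, ω i = v := hT.2.1
  -- the occurrence set
  have hJfin : {j : ℕ | occursAt (patternP' d) ω j}.Finite := by
    refine (Set.finite_Iio N).subset ?_
    intro j hj
    obtain ⟨hjN, -, -, -⟩ := occ_data hj
    exact Set.mem_Iio.2 (by omega)
  set J := hJfin.toFinset with hJ
  have hJocc : ∀ j ∈ J, occursAt (patternP' d) ω j :=
    fun j hj => (Set.Finite.mem_toFinset hJfin).1 hj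
  have hJcard : (numOcc (patternP' d) ω : ℝ) = (J.card : ℝ) := by
    rw [numOcc, Set.ncard_eq_toFinset_card _ hJfin]
  -- base points
  set b : ℕ → Vtx d := fun j => if h : j < N then ω ⟨j, h⟩ else 0 with hbdef
  have hbj : ∀ j ∈ J, ∃ h : j + 4 ≤ N, b j = ω ⟨j, by omega⟩ := by
    intro j hj
    obtain ⟨hjN, -, -, -⟩ := occ_data (hJocc j hj)
    exact ⟨hjN, dif_pos (by omega)⟩
  have hbP : ∀ j ∈ J, sqV d (b j) ⊆ P.verts := by
    intro j hj
    obtain ⟨hjN, hbeq⟩ := hbj j hj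
    rw [hbeq]
    intro w hw
    obtain ⟨k, hk, hk3, rfl⟩ := occ_sq_mem (hJocc j hj) hjN w hw
    exact (hrange _).2 ⟨⟨j + k, hk⟩, rfl⟩
  have hdisj : ∀ j ∈ J, ∀ j' ∈ J, j ≠ j' → Disjoint (sqV d (b j)) (sqV d (b j')) := by
    intro j hj j' hj' hne
    obtain ⟨hjN, hbeq⟩ := hbj j hj
    obtain ⟨hj'N, hb'eq⟩ := hbj j' hj'
    rw [hbeq, hb'eq]
    exact occ_sq_disjoint hd hinj (hJocc j hj) (hJocc j' hj') hne hjN hj'N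
  -- finite sums
  have hGfin : G.verts.Finite := hG.1
  have hG'fin : (graphDiff G P).verts.Finite := hGfin.subset (Set.diff_subset : G.verts \ P.verts ⊆ G.verts)
  have hΩ'fin := loopConfigs_finite (G := graphDiff G P) hG'fin
  have hΩfin := loopConfigs_finite (G := G) hGfin
  set t : ℝ := lam ^ 4 * n with htdef
  have htpos : 0 < t := by positivity
  set Φ : (latticeGraph d).Subgraph × Finset ℕ → (latticeGraph d).Subgraph := fun p =>
    if h : p.1 ∈ loopConfigs (graphDiff G P) ∧ p.2 ⊆ J then
      addSqs hd G p.1 b p.2 (κ_le_G G P p.1 h.1) (hb_of_S G P b J hbP hPG h.2)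
    else ⊥ with hΦdef
  set A : Finset ((latticeGraph d).Subgraph × Finset ℕ) :=
    hΩ'fin.toFinset ×ˢ J.powerset with hAdef
  have hAmem : ∀ p ∈ A, p.1 ∈ loopConfigs (graphDiff G P) ∧ p.2 ⊆ J := by
    intro p hp
    rw [hAdef, Finset.mem_product] at hp
    exact ⟨(Set.Finite.mem_toFinset _).1 hp.1, Finset.mem_powerset.1 hp.2⟩
  have hinjΦ : ∀ p ∈ A, ∀ q ∈ A, Φ p = Φ q → p = q := by
    intro p hp q hq hpq
    obtain ⟨hp1, hp2⟩ := hAmem p hp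
    obtain ⟨hq1, hq2⟩ := hAmem q hq
    have hΦp : Φ p
        = addSqs hd G p.1 b p.2 (κ_le_G G P p.1 hp1) (hb_of_S G P b J hbP hPG hp2) :=
      dif_pos ⟨hp1, hp2⟩
    have hΦq : Φ q
        = addSqs hd G q.1 b q.2 (κ_le_G G P q.1 hq1) (hb_of_S G P b J hbP hPG hq2) :=
      dif_pos ⟨hq1, hq2⟩
    rw [hΦp, hΦq] at hpq
    obtain ⟨h1, h2⟩ := addSqs_injective hd G P b J hbP hdisj hPG hp1 hq1 hp2 hq2 hpq
    exact Prod.ext h1 h2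
  have hkey : partitionZ lam n (graphDiff G P) * (1 + t) ^ J.card ≤ partitionZ lam n G := by
    rw [partitionZ_eq_sum hΩ'fin, partitionZ_eq_sum hΩfin, Finset.sum_mul]
    have hexp : ∀ κ ∈ hΩ'fin.toFinset,
        loopWt lam n κ * (1 + t) ^ J.card = ∑ S ∈ J.powerset, loopWt lam n (Φ (κ, S)) := by
      intro κ hκm
      have hκ : κ ∈ loopConfigs (graphDiff G P) := (Set.Finite.mem_toFinset _).1 hκm
      have hbin : (1 + t) ^ J.card = ∑ S ∈ J.powerset, t ^ S.card := by
        calc (1 + t) ^ J.card = ∏ _j ∈ J, (t + 1) := by rw [Finset.prod_const, add_comm]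
          _ = ∑ S ∈ J.powerset, (∏ _j ∈ S, t) * ∏ _j ∈ J \ S, (1 : ℝ) :=
              Finset.prod_add _ _ J
          _ = ∑ S ∈ J.powerset, t ^ S.card := by
              refine Finset.sum_congr rfl fun S hS => ?_
              rw [Finset.prod_const, Finset.prod_const, one_pow, mul_one]
      rw [hbin, Finset.mul_sum]
      refine Finset.sum_congr rfl fun S hS => ?_
      have hSJ : S ⊆ J := Finset.mem_powerset.1 hS
      have hΦeq : Φ (κ, S)
          = addSqs hd G κ b S (κ_le_G G P κ hκ) (hb_of_S G P b J hbP hPG hSJ) :=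
        dif_pos ⟨hκ, hSJ⟩
      rw [hΦeq, addSqs_wt hd G P κ b J hbP hdisj hG hPG hκ S hSJ]
    have hprod : ∑ p ∈ A, loopWt lam n (Φ p)
        = ∑ κ ∈ hΩ'fin.toFinset, ∑ S ∈ J.powerset, loopWt lam n (Φ (κ, S)) :=
      Finset.sum_product _ _ _
    have himg : ∑ τ ∈ A.image Φ, loopWt lam n τ = ∑ p ∈ A, loopWt lam n (Φ p) :=
      Finset.sum_image hinjΦ
    rw [Finset.sum_congr rfl hexp, ← hprod, ← himg]
    refine Finset.sum_le_sum_of_subset_of_nonneg ?_ (fun τ _ _ => loopWt_nonneg hlam hn τ)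
    intro τ hτ
    obtain ⟨p, hpA, rfl⟩ := Finset.mem_image.1 hτ
    obtain ⟨hp1, hp2⟩ := hAmem p hpA
    rw [Set.Finite.mem_toFinset]
    have hΦeq : Φ p
        = addSqs hd G p.1 b p.2 (κ_le_G G P p.1 hp1) (hb_of_S G P b J hbP hPG hp2) :=
      dif_pos ⟨hp1, hp2⟩
    rw [hΦeq]
    exact addSqs_mem hd G P p.1 b J hbP hdisj hG hPG hp1 hp2
  -- conclude
  have hZpos : 0 < partitionZ lam n G := partitionZ_pos hlam hn hGfin
  have hZ'nn : 0 ≤ partitionZ lam n (graphDiff G P) := by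
    rw [partitionZ_eq_sum hΩ'fin]
    exact Finset.sum_nonneg fun κ _ => loopWt_nonneg hlam hn κ
  have ht1 : (1 : ℝ) < 1 + t := by linarith
  have hcard : a * (N : ℝ) ≤ (J.card : ℝ) := le_trans hocc (le_of_eq hJcard)
  have hrle : (1 + t) ^ (a * (N : ℝ)) ≤ (1 + t) ^ (J.card : ℕ) := by
    have h2 := (Real.rpow_le_rpow_left_iff (x := 1 + t) ht1).2 hcard
    rwa [Real.rpow_natCast] at h2
  have hrpos : 0 < (1 + t) ^ (a * (N : ℝ)) := Real.rpow_pos_of_pos (by linarith) _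
  rw [div_le_div_iff₀ hZpos hrpos]
  calc partitionZ lam n (graphDiff G P) * (1 + t) ^ (a * (N : ℝ))
      ≤ partitionZ lam n (graphDiff G P) * (1 + t) ^ J.card :=
        mul_le_mul_of_nonneg_left hrle hZ'nn
    _ ≤ partitionZ lam n G := hkey
    _ = 1 * partitionZ lam n G := (one_mul _).symm
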